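/- (Lemma 5, second estimate, concrete form) Suppose all partial derivatives D^{(α,β)}κ = ∂^{α+β}κ/∂s^α∂t^β with 0 ≤ α+β ≤ 2r+3 exist, are continuous on [0,1]×[0,1], and satisfy |D^{(α,β)}κ(s,t)| ≤ C₂. Then there exists a constant C > 0, independent of n, such that for every continuous ψ : [0,1] → ℝ, writing x := Kψ and z := K(x − Q_n x), one has ‖K(z − Q_n z)‖_∞ ≤ C ‖ψ‖_∞ h^{4r+4}. -/

import Mathlib

open Set MeasureTheory Polynomial

/-- Equidistant interpolation nodes: `τ_j^i = t_{j-1} + i·h/(2r)` with `h = 1/n`. -/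
noncomputable def tau (n r j i : ℕ) : ℝ :=
  ((j : ℝ) - 1) / n + (i : ℝ) / (2 * r * n)

/-- The unique polynomial of degree ≤ 2r interpolating `x` at the nodes of `Δ_j`. -/
noncomputable def interpPoly (n r j : ℕ) (x : ℝ → ℝ) : Polynomial ℝ :=
  Lagrange.interpolate (Finset.range (2 * r + 1)) (tau n r j) (fun i => x (tau n r j i))

/-- The interpolatory projection `Q_n x`: on each subinterval `Δ_j = [(j-1)/n, j/n]` it
coincides with the polynomial of degree ≤ 2r interpolating `x` at the nodes `τ_j^i`.
(At a partition point both adjacent pieces take the value `x(t_j)`.) -/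
noncomputable def Qn (n r : ℕ) (x : ℝ → ℝ) (t : ℝ) : ℝ :=
  (interpPoly n r (min n (⌊t * (n : ℝ)⌋₊ + 1)) x).eval t

/-- The Fredholm integral operator with kernel `κ`. -/
noncomputable def Kop (κ : ℝ → ℝ → ℝ) (x : ℝ → ℝ) (s : ℝ) : ℝ :=
  ∫ t in (0:ℝ)..1, κ s t * x t

/-- Supremum norm on `[0,1]`. -/
noncomputable def supNorm (f : ℝ → ℝ) : ℝ :=
  ⨆ t : Set.Icc (0:ℝ) 1, |f t.1|

/-- The nodal polynomial `Φ_j(t) = ∏_{i=0}^{2r} (t − τ_j^i)`. -/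
noncomputable def Phi (n r j : ℕ) (t : ℝ) : ℝ :=
  ∏ i ∈ Finset.range (2 * r + 1), (t - tau n r j i)

/-- `‖x‖_{k,∞} = max_{0 ≤ i ≤ k} ‖x^{(i)}‖_∞` (derivatives taken within `[0,1]`). -/
noncomputable def cknorm (k : ℕ) (x : ℝ → ℝ) : ℝ :=
  ⨆ i : Fin (k + 1), supNorm (iteratedDerivWithin i x (Set.Icc 0 1))

section nodes

variable {n r j : ℕ} (hn : 1 ≤ n) (hr : 1 ≤ r)

lemma step_pos (hn : 1 ≤ n) (hr : 1 ≤ r) : (0:ℝ) < 1 / (2 * r * n) := by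
  have : (0:ℝ) < 2 * r * n := by positivity
  positivity

lemma tau_eq (i : ℕ) : tau n r j i = ((j:ℝ)-1)/n + i * (1/(2*r*n)) := by
  simp [tau, div_eq_mul_inv]

lemma tau_injOn (hn : 1 ≤ n) (hr : 1 ≤ r) :
    Set.InjOn (tau n r j) (Finset.range (2*r+1)) := by
  intro a _ b _ hab
  have hs := step_pos hn hr
  have : (a:ℝ) * (1/(2*r*n)) = b * (1/(2*r*n)) := by
    have := hab
    rw [tau_eq, tau_eq] at this
    linarith
  have : (a:ℝ) = b := by
    field_simp at this
    exact_mod_cast this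
  exact_mod_cast this

lemma tau_mem (hn : 1 ≤ n) (hr : 1 ≤ r) {i : ℕ} (hi : i ≤ 2*r) :
    tau n r j i ∈ Icc (((j:ℝ)-1)/n) (((j:ℝ)-1)/n + 1/n) := by
  have hs := step_pos (n := n) (r := r) hn hr
  rw [tau_eq]
  constructor
  · nlinarith [Nat.cast_nonneg (α := ℝ) i]
  · have h1 : (i:ℝ) ≤ 2*r := by exact_mod_cast hi
    have h2 : (i:ℝ) * (1/(2*r*n)) ≤ (2*r) * (1/(2*r*n)) := by nlinarith
    have h3 : (2*(r:ℝ)) * (1/(2*r*n)) = 1/n := by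
      have hr' : (0:ℝ) < 2*r := by positivity
      have hn' : (0:ℝ) < n := by positivity
      field_simp
    linarith

lemma tau_gap (hn : 1 ≤ n) (hr : 1 ≤ r) {a b : ℕ} (hab : a ≠ b) :
    1/(2*(r:ℝ)*n) ≤ |tau n r j a - tau n r j b| := by
  have hs := step_pos (n := n) (r := r) hn hr
  rw [tau_eq, tau_eq]
  have : ((j:ℝ)-1)/n + a * (1/(2*r*n)) - (((j:ℝ)-1)/n + b * (1/(2*r*n)))
      = ((a:ℝ) - b) * (1/(2*r*n)) := by ring
  rw [this, abs_mul, abs_of_pos hs]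
  have h1 : (1:ℝ) ≤ |(a:ℝ) - b| := by
    have : ((a:ℝ) - b) = ((a:ℤ) - b : ℤ) := by push_cast; ring
    rw [this, ← Int.cast_abs]
    have : (1:ℤ) ≤ |(a:ℤ) - b| := by
      have h : (a:ℤ) ≠ b := fun h => hab (by exact_mod_cast h)
      rcases abs_cases ((a:ℤ) - b) with ⟨h1, _⟩ | ⟨h1, _⟩ <;> omega
    exact_mod_cast this
  nlinarith

/-- Stability of the local interpolation operator. -/
lemma interp_stab (hn : 1 ≤ n) (hr : 1 ≤ r) {t M : ℝ}
    (ht : t ∈ Icc (((j:ℝ)-1)/n) (((j:ℝ)-1)/n + 1/n)) (v : ℕ → ℝ)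
    (hv : ∀ i ≤ 2*r, |v i| ≤ M) :
    |Polynomial.eval t (Lagrange.interpolate (Finset.range (2*r+1)) (tau n r j) v)|
      ≤ ((2*r+1) * (2*r)^(2*r)) * M := by
  have hM : 0 ≤ M := le_trans (abs_nonneg _) (hv 0 (by omega))
  have hn' : (0:ℝ) < n := by positivity
  rw [Lagrange.interpolate_apply, Polynomial.eval_finset_sum]
  have key : ∀ i ∈ Finset.range (2*r+1),
      |Polynomial.eval t (Polynomial.C (v i) * Lagrange.basis (Finset.range (2*r+1)) (tau n r j) i)|
        ≤ (2*r)^(2*r) * M := by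
    intro i hi
    rw [Polynomial.eval_mul, Polynomial.eval_C, abs_mul]
    have hbas : |Polynomial.eval t (Lagrange.basis (Finset.range (2*r+1)) (tau n r j) i)|
        ≤ ((2*r:ℝ))^(2*r) := by
      rw [Lagrange.basis, Polynomial.eval_prod, Finset.abs_prod]
      have hcard : ((Finset.range (2*r+1)).erase i).card = 2*r := by
        rw [Finset.card_erase_of_mem (by exact hi)]
        simp
      calc ∏ k ∈ (Finset.range (2*r+1)).erase i,
            |Polynomial.eval t (Lagrange.basisDivisor (tau n r j i) (tau n r j k))|
          ≤ ∏ k ∈ (Finset.range (2*r+1)).erase i, (2*(r:ℝ)) := by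
            apply Finset.prod_le_prod (fun _ _ => abs_nonneg _)
            intro k hk
            obtain ⟨hki, hkmem⟩ := Finset.mem_erase.mp hk
            have hik : i ≠ k := fun h => hki h.symm
            rw [Lagrange.basisDivisor]
            rw [Polynomial.eval_mul, Polynomial.eval_C, Polynomial.eval_sub,
              Polynomial.eval_X, Polynomial.eval_C, abs_mul, abs_inv]
            have hgap := tau_gap (j := j) hn hr hik
            have hstep := step_pos (n := n) (r := r) hn hr
            have h1 : |tau n r j i - tau n r j k|⁻¹ ≤ 2*r*n := by
              rw [inv_le_comm₀ (lt_of_lt_of_le hstep hgap) (by positivity)]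
              calc (2*(r:ℝ)*n)⁻¹ = 1/(2*r*n) := by rw [one_div]
                _ ≤ _ := hgap
            have h2 : |t - tau n r j k| ≤ 1/n := by
              have hk2r : k ≤ 2*r := by
                have := Finset.mem_range.mp hkmem; omega
              have hτ := tau_mem (j := j) hn hr hk2r
              rw [abs_sub_le_iff]
              constructor <;>
                [skip; skip] <;>
                · obtain ⟨h3, h4⟩ := ht
                  obtain ⟨h5, h6⟩ := hτ
                  linarith
            calc |tau n r j i - tau n r j k|⁻¹ * |t - tau n r j k|
                ≤ (2*r*n) * (1/n) := by
                  apply mul_le_mul h1 h2 (abs_nonneg _)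
                  positivity
              _ = 2*r := by field_simp
        _ = (2*(r:ℝ))^(2*r) := by rw [Finset.prod_const, hcard]
    calc |v i| * |Polynomial.eval t (Lagrange.basis (Finset.range (2*r+1)) (tau n r j) i)|
        ≤ M * ((2*r:ℝ))^(2*r) := by
          apply mul_le_mul (hv i (by have := Finset.mem_range.mp hi; omega)) hbas
            (abs_nonneg _) hM
      _ = (2*r)^(2*r) * M := by push_cast; ring
  calc |∑ i ∈ Finset.range (2*r+1), Polynomial.eval t
        (Polynomial.C (v i) * Lagrange.basis (Finset.range (2*r+1)) (tau n r j) i)|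
      ≤ ∑ i ∈ Finset.range (2*r+1), |Polynomial.eval t
        (Polynomial.C (v i) * Lagrange.basis (Finset.range (2*r+1)) (tau n r j) i)| :=
        Finset.abs_sum_le_sum_abs _ _
    _ ≤ ∑ _i ∈ Finset.range (2*r+1), (2*(r:ℝ))^(2*r) * M := Finset.sum_le_sum key
    _ = ((2*r+1) * (2*r)^(2*r)) * M := by
        rw [Finset.sum_const, Finset.card_range]
        push_cast; ring

end nodes
section phip

variable {n r j : ℕ}

/-- The nodal polynomial as a `Polynomial`. -/
noncomputable def PhiP (n r j : ℕ) : Polynomial ℝ :=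
  ∏ i ∈ Finset.range (2*r+1), (Polynomial.X - Polynomial.C (tau n r j i))

lemma PhiP_monic : (PhiP n r j).Monic :=
  Polynomial.monic_prod_of_monic _ _ (fun i _ => Polynomial.monic_X_sub_C _)

lemma PhiP_natDegree : (PhiP n r j).natDegree = 2*r+1 := by
  rw [PhiP, Polynomial.natDegree_prod _ _ (fun i _ => Polynomial.X_sub_C_ne_zero _)]
  simp

lemma PhiP_eval (t : ℝ) :
    Polynomial.eval t (PhiP n r j) = ∏ i ∈ Finset.range (2*r+1), (t - tau n r j i) := by
  rw [PhiP, Polynomial.eval_prod]; simp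

lemma PhiP_eval_node {i : ℕ} (hi : i ∈ Finset.range (2*r+1)) :
    Polynomial.eval (tau n r j i) (PhiP n r j) = 0 := by
  rw [PhiP_eval]
  exact Finset.prod_eq_zero hi (by ring)

lemma PhiP_eval_abs_le (hn : 1 ≤ n) (hr : 1 ≤ r) {t : ℝ}
    (ht : t ∈ Icc (((j:ℝ)-1)/n) (((j:ℝ)-1)/n + 1/n)) :
    |Polynomial.eval t (PhiP n r j)| ≤ (1/n)^(2*r+1) := by
  rw [PhiP_eval, Finset.abs_prod]
  calc ∏ i ∈ Finset.range (2*r+1), |t - tau n r j i|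
      ≤ ∏ _i ∈ Finset.range (2*r+1), (1/(n:ℝ)) := by
        apply Finset.prod_le_prod (fun _ _ => abs_nonneg _)
        intro i hi
        have hτ := tau_mem (j := j) hn hr (show i ≤ 2*r by
          have := Finset.mem_range.mp hi; omega)
        rw [abs_sub_le_iff]
        obtain ⟨h3, h4⟩ := ht; obtain ⟨h5, h6⟩ := hτ
        constructor <;> linarith
    _ = (1/n)^(2*r+1) := by rw [Finset.prod_const, Finset.card_range]

/-- Symmetry: the nodal polynomial is odd about the midpoint. -/
lemma PhiP_symm (hn : 1 ≤ n) (hr : 1 ≤ r) (t : ℝ) :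
    Polynomial.eval ((2*((j:ℝ)-1)/n + 1/n) - t) (PhiP n r j)
      = - Polynomial.eval t (PhiP n r j) := by
  rw [PhiP_eval, PhiP_eval]
  have hn' : (0:ℝ) < n := by positivity
  have hr' : (0:ℝ) < r := by positivity
  have hs : (2*(r:ℝ)) * (1/(2*r*n)) = 1/n := by field_simp
  have key : ∀ i ∈ Finset.range (2*r+1),
      (2*((j:ℝ)-1)/n + 1/n) - t - tau n r j i
        = -(t - tau n r j (2*r - i)) := by
    intro i hi
    have hi' : i ≤ 2*r := by have := Finset.mem_range.mp hi; omega
    rw [tau_eq, tau_eq]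
    have hcast : ((2*r - i : ℕ) : ℝ) = 2*(r:ℝ) - i := by
      push_cast [Nat.cast_sub hi']; ring
    rw [hcast]
    have expand : (2*(r:ℝ) - i) * (1/(2*r*n))
        = 2*(r:ℝ) * (1/(2*r*n)) - i * (1/(2*r*n)) := by ring
    rw [expand, hs]
    ring
  rw [Finset.prod_congr rfl key]
  have h5 : ∀ i ∈ Finset.range (2*r+1), -(t - tau n r j (2*r - i))
      = (-1) * (t - tau n r j (2*r - i)) := fun i _ => by ring
  rw [Finset.prod_congr rfl h5, Finset.prod_mul_distrib, Finset.prod_const, Finset.card_range,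
    Odd.neg_one_pow ⟨r, by ring⟩]
  have h6 : ∏ i ∈ Finset.range (2*r+1), (t - tau n r j (2*r - i))
      = ∏ i ∈ Finset.range (2*r+1), (t - tau n r j i) := by
    rw [← Finset.prod_range_reflect]
    apply Finset.prod_congr rfl
    intro i hi
    have hi' : i < 2*r+1 := Finset.mem_range.mp hi
    congr 2
    omega
  rw [h6]
  ring

/-- The integral of the nodal polynomial over its interval vanishes. -/
lemma PhiP_integral_zero (hn : 1 ≤ n) (hr : 1 ≤ r) :
    (∫ t in (((j:ℝ)-1)/n)..(((j:ℝ)-1)/n + 1/n), Polynomial.eval t (PhiP n r j)) = 0 := by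
  set a := ((j:ℝ)-1)/n
  set b := ((j:ℝ)-1)/n + 1/n
  have hc : a + b = 2*((j:ℝ)-1)/n + 1/n := by simp [a, b]; ring
  have h1 : (∫ t in a..b, Polynomial.eval ((a+b) - t) (PhiP n r j))
      = ∫ t in (a+b)-b..(a+b)-a, Polynomial.eval t (PhiP n r j) :=
    intervalIntegral.integral_comp_sub_left (fun t => Polynomial.eval t (PhiP n r j)) (a+b)
  have h2 : (a+b)-b = a := by ring
  have h3 : (a+b)-a = b := by ring
  rw [h2, h3] at h1
  have h4 : (∫ t in a..b, Polynomial.eval ((a+b) - t) (PhiP n r j))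
      = ∫ t in a..b, - Polynomial.eval t (PhiP n r j) := by
    apply intervalIntegral.integral_congr
    intro t _
    rw [hc]
    exact PhiP_symm hn hr t
  rw [h4, intervalIntegral.integral_neg] at h1
  linarith

/-- Interpolating a polynomial of degree ≤ 2r+1 at the 2r+1 nodes:
the error is the leading coefficient times the nodal polynomial. -/
lemma interp_poly_of_deg (hn : 1 ≤ n) (hr : 1 ≤ r) {q : Polynomial ℝ}
    (hq : q.natDegree ≤ 2*r+1) :
    Lagrange.interpolate (Finset.range (2*r+1)) (tau n r j)
        (fun i => Polynomial.eval (tau n r j i) q)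
      = q - Polynomial.C (q.coeff (2*r+1)) * PhiP n r j := by
  set c := q.coeff (2*r+1)
  set p := q - Polynomial.C c * PhiP n r j with hp
  have hdeg : p.degree < ((Finset.range (2*r+1)).card : ℕ) := by
    rw [Finset.card_range]
    rw [Polynomial.degree_lt_iff_coeff_zero]
    intro m hm
    rw [Polynomial.coeff_sub, Polynomial.coeff_C_mul]
    rcases eq_or_lt_of_le hm with h | h
    · rw [← h]
      have : (PhiP n r j).coeff (2*r+1) = 1 := by
        have := PhiP_monic (n := n) (r := r) (j := j)
        rw [Polynomial.Monic] at this
        rw [← PhiP_natDegree (n := n) (r := r) (j := j)]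
        exact this
      rw [this, mul_one, sub_self]
    · have h1 : q.coeff m = 0 :=
        Polynomial.coeff_eq_zero_of_natDegree_lt (lt_of_le_of_lt hq h)
      have h2 : (PhiP n r j).coeff m = 0 :=
        Polynomial.coeff_eq_zero_of_natDegree_lt (by rw [PhiP_natDegree]; exact h)
      rw [h1, h2, mul_zero, sub_self]
  have h1 : Lagrange.interpolate (Finset.range (2*r+1)) (tau n r j)
      (fun i => Polynomial.eval (tau n r j i) q)
    = Lagrange.interpolate (Finset.range (2*r+1)) (tau n r j)
      (fun i => Polynomial.eval (tau n r j i) p) := by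
    apply Lagrange.interpolate_eq_of_values_eq_on
    intro i hi
    rw [hp, Polynomial.eval_sub, Polynomial.eval_mul, Polynomial.eval_C, PhiP_eval_node hi,
      mul_zero, sub_zero]
  rw [h1, ← Lagrange.eq_interpolate (f := p) (tau_injOn (j := j) hn hr) hdeg]

end phip
section taylor

/-- Taylor's theorem with Lagrange-type remainder bound, for an explicit chain of
derivatives `F 0, F 1, ..., F m` on `[a,b]`, expanding at the left endpoint. -/
lemma chain_taylor (m : ℕ) (F : ℕ → ℝ → ℝ) {a b M : ℝ} (hab : a ≤ b)
    (hder : ∀ k < m, ∀ t ∈ Icc a b, HasDerivWithinAt (F k) (F (k+1) t) (Icc a b) t)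
    (hM : ∀ t ∈ Icc a b, |F m t| ≤ M) :
    ∀ t ∈ Icc a b,
      |F 0 t - ∑ k ∈ Finset.range m, F k a * (t-a)^k / (Nat.factorial k)|
        ≤ M * (t-a)^m / (Nat.factorial m) := by
  induction m generalizing F with
  | zero =>
    intro t ht
    simpa using hM t ht
  | succ m ih =>
    intro t ht
    set G := fun t => F 0 t - ∑ k ∈ Finset.range (m+1), F k a * (t-a)^k / (Nat.factorial k)
      with hGdef
    set G' := fun t => F 1 t - ∑ k ∈ Finset.range m, F (k+1) a * (t-a)^k / (Nat.factorial k)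
      with hG'def
    have hpoly : ∀ t : ℝ, HasDerivAt
        (fun t => ∑ k ∈ Finset.range (m+1), F k a * (t-a)^k / (Nat.factorial k))
        (∑ k ∈ Finset.range m, F (k+1) a * (t-a)^k / (Nat.factorial k)) t := by
      intro t
      have h0 : HasDerivAt
          (fun t : ℝ => ∑ k ∈ Finset.range (m+1), F k a * (t-a)^k / (Nat.factorial k))
          (∑ k ∈ Finset.range (m+1), F k a * ((k:ℝ) * (t-a)^(k-1)) / (Nat.factorial k)) t := by
        apply HasDerivAt.fun_sum
        intro k _
        have h1 : HasDerivAt (fun t : ℝ => (t-a)^k) ((k:ℝ) * (t-a)^(k-1)) t := by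
          simpa using ((hasDerivAt_id t).sub_const a).fun_pow k
        have h2 := (h1.const_mul (F k a)).div_const (Nat.factorial k)
        convert h2 using 1
      have hsum : ∑ k ∈ Finset.range (m+1), F k a * ((k:ℝ) * (t-a)^(k-1)) / (Nat.factorial k)
          = ∑ k ∈ Finset.range m, F (k+1) a * (t-a)^k / (Nat.factorial k) := by
        rw [Finset.sum_range_succ']
        have hz : F 0 a * (((0:ℕ):ℝ) * (t-a)^(0-1)) / (Nat.factorial 0) = 0 := by simp
        rw [hz, add_zero]
        apply Finset.sum_congr rfl
        intro k _
        rw [Nat.factorial_succ]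
        have hfk : ((Nat.factorial k : ℝ)) ≠ 0 := by
          exact_mod_cast (Nat.factorial_pos k).ne'
        have hk : ((k:ℝ)+1) ≠ 0 := by positivity
        push_cast
        field_simp
      rw [← hsum]
      exact h0
    have hG : ∀ t ∈ Icc a b, HasDerivWithinAt G (G' t) (Icc a b) t := by
      intro t ht
      exact (hder 0 (by omega) t ht).sub (hpoly t).hasDerivWithinAt
    have hG'bound : ∀ t ∈ Icc a b, |G' t| ≤ M * (t-a)^m / (Nat.factorial m) := by
      have := ih (fun k => F (k+1))
        (fun k hk t ht => hder (k+1) (by omega) t ht)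
        (fun t ht => hM t ht)
      intro t ht
      exact this t ht
    -- fencing
    set B := fun t : ℝ => M * (t-a)^(m+1) / (Nat.factorial (m+1)) with hBdef
    set B' := fun t : ℝ => M * (t-a)^m / (Nat.factorial m) with hB'def
    have hB : ∀ x : ℝ, HasDerivAt B (B' x) x := by
      intro x
      have h1 : HasDerivAt (fun t : ℝ => (t-a)^(m+1)) (((m:ℝ)+1) * (x-a)^m) x := by
        simpa using ((hasDerivAt_id x).sub_const a).fun_pow (m+1)
      have h2 : HasDerivAt (fun x : ℝ => M * (x - a) ^ (m + 1) / ((m + 1).factorial : ℝ))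
          (M * (((m:ℝ) + 1) * (x - a) ^ m) / ((m + 1).factorial : ℝ)) x :=
        (h1.const_mul M).div_const (Nat.factorial (m+1))
      convert h2 using 1
      rw [hB'def]
      rw [Nat.factorial_succ]
      have hfk : ((Nat.factorial m : ℝ)) ≠ 0 := by exact_mod_cast (Nat.factorial_pos m).ne'
      have hk : ((m:ℝ)+1) ≠ 0 := by positivity
      push_cast
      field_simp
    have hGa : G a = 0 := by
      rw [hGdef]
      simp only [Finset.sum_range_succ']
      simp
    have key : ∀ x ∈ Icc a b, ‖G x‖ ≤ B x := by
      apply image_norm_le_of_norm_deriv_right_le_deriv_boundary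
        (f' := G') (B := B) (B' := B')
      · exact fun x hx => (hG x hx).continuousWithinAt
      · intro x hx
        apply (hG x (mem_Icc_of_Ico hx)).mono_of_mem_nhdsWithin
        rw [mem_nhdsWithin]
        exact ⟨Ioo (a-1) b, isOpen_Ioo, ⟨by linarith [hx.1], hx.2⟩,
          fun y hy => ⟨le_trans hx.1 hy.2, le_of_lt hy.1.2⟩⟩
      · rw [Real.norm_eq_abs, hGa, abs_zero, hBdef]
        simp
      · exact hB
      · intro x hx
        rw [Real.norm_eq_abs]
        exact hG'bound x (mem_Icc_of_Ico hx)
    have := key t ht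
    rw [Real.norm_eq_abs] at this
    exact this

end taylor
section interval

set_option maxHeartbeats 1000000 in

/-- Core per-interval superconvergence estimate. -/
lemma interval_est {n r j : ℕ} (hn : 1 ≤ n) (hr : 1 ≤ r) (hj1 : 1 ≤ j) (hjn : j ≤ n)
    (g : ℝ → ℝ) (Cg Lg : ℝ) (hLg : 0 ≤ Lg)
    (hgc : ContinuousOn g (Icc (((j:ℝ)-1)/n) (((j:ℝ)-1)/n + 1/n)))
    (hg : ∀ t ∈ Icc (((j:ℝ)-1)/n) (((j:ℝ)-1)/n + 1/n), |g t| ≤ Cg)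
    (hLip : ∀ t ∈ Icc (((j:ℝ)-1)/n) (((j:ℝ)-1)/n + 1/n),
        |g t - g (((j:ℝ)-1)/n)| ≤ Lg * |t - ((j:ℝ)-1)/n|)
    (W : ℕ → ℝ → ℝ) (M : ℝ)
    (hWder : ∀ k < 2*r+2, ∀ t ∈ Icc (((j:ℝ)-1)/n) (((j:ℝ)-1)/n + 1/n),
        HasDerivWithinAt (W k) (W (k+1) t) (Icc (((j:ℝ)-1)/n) (((j:ℝ)-1)/n + 1/n)) t)
    (hWbd : ∀ k ≤ 2*r+2, ∀ t ∈ Icc (((j:ℝ)-1)/n) (((j:ℝ)-1)/n + 1/n), |W k t| ≤ M) :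
    |∫ t in (((j:ℝ)-1)/n)..(((j:ℝ)-1)/n + 1/n),
        g t * (W 0 t - Polynomial.eval t (interpPoly n r j (W 0)))|
      ≤ ((((2*r+1) * (2*r)^(2*r) : ℝ) + 1) * Cg + Lg) * M * (1/n)^(2*r+3) := by
  have hn' : (0:ℝ) < n := by positivity
  set a := ((j:ℝ)-1)/n with ha
  set b := ((j:ℝ)-1)/n + 1/n with hb
  have hh : (0:ℝ) < 1/n := by positivity
  have hab : a ≤ b := by rw [ha, hb]; linarith
  have haI : a ∈ Icc a b := ⟨le_refl a, hab⟩
  have hM0 : 0 ≤ M := le_trans (abs_nonneg _) (hWbd 0 (by omega) a haI)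
  have hCg0 : 0 ≤ Cg := le_trans (abs_nonneg _) (hg a haI)
  set Λ : ℝ := ((2*r+1) * (2*r)^(2*r) : ℝ) with hΛ
  have hΛ0 : 0 ≤ Λ := by rw [hΛ]; positivity
  -- the Taylor remainder
  set R := fun t => W 0 t - ∑ k ∈ Finset.range (2*r+2), W k a * (t-a)^k / (Nat.factorial k)
    with hRdef
  have hR : ∀ t ∈ Icc a b, |R t| ≤ M * (1/n)^(2*r+2) := by
    intro t ht
    have h1 := chain_taylor (2*r+2) W hab hWder (hWbd (2*r+2) le_rfl) t ht
    have hta : 0 ≤ t - a := by linarith [ht.1]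
    have htb : t - a ≤ 1/n := by
      have := ht.2; rw [hb] at this; linarith
    have h3 : (t-a)^(2*r+2) ≤ (1/n)^(2*r+2) := pow_le_pow_left₀ hta htb _
    have h6 : (1:ℝ) ≤ (Nat.factorial (2*r+2) : ℝ) :=
      Nat.one_le_cast.mpr (Nat.factorial_pos _)
    calc |R t| ≤ M * (t-a)^(2*r+2) / (Nat.factorial (2*r+2)) := h1
      _ ≤ M * (t-a)^(2*r+2) := div_le_self (mul_nonneg hM0 (pow_nonneg hta _)) h6
      _ ≤ M * (1/n)^(2*r+2) := mul_le_mul_of_nonneg_left h3 hM0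
  -- the Taylor polynomial
  set q : Polynomial ℝ := ∑ k ∈ Finset.range (2*r+2),
      Polynomial.C (W k a / (Nat.factorial k)) * (Polynomial.X - Polynomial.C a)^k with hq
  have hqeval : ∀ t : ℝ, q.eval t
      = ∑ k ∈ Finset.range (2*r+2), W k a * (t-a)^k / (Nat.factorial k) := by
    intro t
    rw [hq, Polynomial.eval_finset_sum]
    apply Finset.sum_congr rfl
    intro k _
    rw [Polynomial.eval_mul, Polynomial.eval_C, Polynomial.eval_pow, Polynomial.eval_sub,
      Polynomial.eval_X, Polynomial.eval_C]
    ring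
  have hqdeg : q.natDegree ≤ 2*r+1 := by
    rw [hq]
    apply Polynomial.natDegree_sum_le_of_forall_le
    intro k hk
    calc (Polynomial.C (W k a / (Nat.factorial k)) * (Polynomial.X - Polynomial.C a)^k).natDegree
        ≤ (Polynomial.C (W k a / (Nat.factorial k))).natDegree
          + ((Polynomial.X - Polynomial.C a)^k).natDegree := Polynomial.natDegree_mul_le
      _ ≤ 0 + k := by
          apply add_le_add
          · exact le_of_eq (Polynomial.natDegree_C _)
          · calc ((Polynomial.X - Polynomial.C a)^k).natDegree
                ≤ k * (Polynomial.X - Polynomial.C a).natDegree := Polynomial.natDegree_pow_le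
              _ = k * 1 := by rw [Polynomial.natDegree_X_sub_C]
              _ = k := mul_one k
      _ ≤ 2*r+1 := by have := Finset.mem_range.mp hk; omega
  have hcoeff : q.coeff (2*r+1) = W (2*r+1) a / (Nat.factorial (2*r+1)) := by
    rw [hq, Polynomial.finset_sum_coeff, Finset.sum_range_succ]
    have hzero : ∀ k ∈ Finset.range (2*r+1),
        (Polynomial.C (W k a / (Nat.factorial k)) * (Polynomial.X - Polynomial.C a)^k).coeff
          (2*r+1) = 0 := by
      intro k hk
      apply Polynomial.coeff_eq_zero_of_natDegree_lt
      calc (Polynomial.C (W k a / (Nat.factorial k)) * (Polynomial.X - Polynomial.C a)^k).natDegree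
          ≤ 0 + k := by
            refine le_trans Polynomial.natDegree_mul_le (add_le_add (le_of_eq
              (Polynomial.natDegree_C _)) ?_)
            calc ((Polynomial.X - Polynomial.C a)^k).natDegree
                ≤ k * (Polynomial.X - Polynomial.C a).natDegree := Polynomial.natDegree_pow_le
              _ = k := by rw [Polynomial.natDegree_X_sub_C, mul_one]
        _ < 2*r+1 := by have := Finset.mem_range.mp hk; omega
    rw [Finset.sum_eq_zero hzero, zero_add]
    rw [Polynomial.coeff_C_mul]
    have hmonic : ((Polynomial.X - Polynomial.C a)^(2*r+1)).Monic :=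
      (Polynomial.monic_X_sub_C a).pow _
    have hdeg2 : ((Polynomial.X - Polynomial.C a)^(2*r+1)).natDegree = 2*r+1 := by
      rw [Polynomial.natDegree_pow, Polynomial.natDegree_X_sub_C, mul_one]
    have : ((Polynomial.X - Polynomial.C a)^(2*r+1)).coeff (2*r+1) = 1 := by
      have h10 := hmonic.coeff_natDegree
      rw [hdeg2] at h10
      exact h10
    rw [this, mul_one]
  have hcabs : |q.coeff (2*r+1)| ≤ M := by
    rw [hcoeff, abs_div]
    have h7 : (1:ℝ) ≤ |(Nat.factorial (2*r+1) : ℝ)| := by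
      rw [abs_of_pos (by exact_mod_cast Nat.factorial_pos _)]
      exact Nat.one_le_cast.mpr (Nat.factorial_pos _)
    exact le_trans (div_le_self (abs_nonneg _) h7) (hWbd (2*r+1) (by omega) a haI)
  -- decomposition of the interpolation polynomial
  have hWq : ∀ t : ℝ, W 0 t = q.eval t + R t := by
    intro t; rw [hqeval, hRdef]; ring
  have hinterp : interpPoly n r j (W 0)
      = (q - Polynomial.C (q.coeff (2*r+1)) * PhiP n r j)
        + Lagrange.interpolate (Finset.range (2*r+1)) (tau n r j)
            (fun i => R (tau n r j i)) := by
    rw [interpPoly]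
    have hv : (fun i : ℕ => W 0 (tau n r j i))
        = (fun i : ℕ => q.eval (tau n r j i)) + (fun i : ℕ => R (tau n r j i)) := by
      funext i
      simp only [Pi.add_apply]
      rw [hWq]
    rw [hv, map_add, interp_poly_of_deg hn hr hqdeg]
  set PR := Lagrange.interpolate (Finset.range (2*r+1)) (tau n r j)
      (fun i => R (tau n r j i)) with hPR
  have herr : ∀ t : ℝ, W 0 t - Polynomial.eval t (interpPoly n r j (W 0))
      = (R t - Polynomial.eval t PR) + q.coeff (2*r+1) * Polynomial.eval t (PhiP n r j) := by
    intro t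
    rw [hinterp, Polynomial.eval_add, Polynomial.eval_sub, Polynomial.eval_mul,
      Polynomial.eval_C, hWq]
    ring
  -- stability bound on PR
  have hPRb : ∀ t ∈ Icc a b, |Polynomial.eval t PR| ≤ Λ * (M * (1/n)^(2*r+2)) := by
    intro t ht
    rw [hPR]
    apply interp_stab hn hr ht
    intro i hi
    exact hR _ (tau_mem hn hr hi)
  -- continuity facts
  have hW0c : ContinuousOn (W 0) (Icc a b) :=
    fun t ht => ((hWder 0 (by omega) t ht).differentiableWithinAt).continuousWithinAt
  have hRc : ContinuousOn R (Icc a b) := by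
    rw [hRdef]
    apply hW0c.sub
    apply Continuous.continuousOn
    apply continuous_finset_sum
    intro k _
    exact (continuous_const.mul ((continuous_id.sub continuous_const).pow k)).div_const _
  -- split the integral
  have hI1int : IntervalIntegrable (fun t => g t * (R t - Polynomial.eval t PR))
      volume a b := by
    apply ContinuousOn.intervalIntegrable
    rw [uIcc_of_le hab]
    exact hgc.mul (hRc.sub (Polynomial.continuous _).continuousOn)
  have hI2int : IntervalIntegrable
      (fun t => g t * (q.coeff (2*r+1) * Polynomial.eval t (PhiP n r j))) volume a b := by
    apply ContinuousOn.intervalIntegrable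
    rw [uIcc_of_le hab]
    exact hgc.mul (continuousOn_const.mul (Polynomial.continuous _).continuousOn)
  have hsplit : (∫ t in a..b, g t * (W 0 t - Polynomial.eval t (interpPoly n r j (W 0))))
      = (∫ t in a..b, g t * (R t - Polynomial.eval t PR))
        + ∫ t in a..b, g t * (q.coeff (2*r+1) * Polynomial.eval t (PhiP n r j)) := by
    rw [← intervalIntegral.integral_add hI1int hI2int]
    apply intervalIntegral.integral_congr
    intro t _
    dsimp only
    rw [herr t]
    ring
  -- bound |I1|
  have hI1 : |∫ t in a..b, g t * (R t - Polynomial.eval t PR)|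
      ≤ Cg * ((1 + Λ) * (M * (1/n)^(2*r+2))) * (1/n) := by
    have := intervalIntegral.norm_integral_le_of_norm_le_const
      (C := Cg * ((1 + Λ) * (M * (1/n)^(2*r+2))))
      (f := fun t => g t * (R t - Polynomial.eval t PR)) (a := a) (b := b) ?_
    · rw [Real.norm_eq_abs] at this
      calc |∫ t in a..b, g t * (R t - Polynomial.eval t PR)|
          ≤ Cg * ((1 + Λ) * (M * (1/n)^(2*r+2))) * |b - a| := this
        _ = Cg * ((1 + Λ) * (M * (1/n)^(2*r+2))) * (1/n) := by
            rw [hb, ha]; rw [abs_of_pos]; ring_nf; linarith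
    · intro x hx
      rw [uIoc_of_le hab] at hx
      have hxI : x ∈ Icc a b := ⟨le_of_lt hx.1, hx.2⟩
      rw [Real.norm_eq_abs, abs_mul]
      have h8 : |R x - Polynomial.eval x PR| ≤ (1 + Λ) * (M * (1/n)^(2*r+2)) := by
        calc |R x - Polynomial.eval x PR| ≤ |R x| + |Polynomial.eval x PR| := abs_sub _ _
          _ ≤ M * (1/n)^(2*r+2) + Λ * (M * (1/n)^(2*r+2)) :=
              add_le_add (hR x hxI) (hPRb x hxI)
          _ = (1 + Λ) * (M * (1/n)^(2*r+2)) := by ring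
      exact mul_le_mul (hg x hxI) h8 (abs_nonneg _) hCg0
  -- bound |I2|
  have hPhiInt : (∫ t in a..b, Polynomial.eval t (PhiP n r j)) = 0 := PhiP_integral_zero hn hr
  have hI2 : |∫ t in a..b, g t * (q.coeff (2*r+1) * Polynomial.eval t (PhiP n r j))|
      ≤ M * (Lg * (1/n)^(2*r+3)) := by
    have hrw : (∫ t in a..b, g t * (q.coeff (2*r+1) * Polynomial.eval t (PhiP n r j)))
        = q.coeff (2*r+1) * ((∫ t in a..b, (g t - g a) * Polynomial.eval t (PhiP n r j))
            + g a * ∫ t in a..b, Polynomial.eval t (PhiP n r j)) := by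
      rw [← intervalIntegral.integral_const_mul]
      rw [← intervalIntegral.integral_add]
      · rw [← intervalIntegral.integral_const_mul]
        apply intervalIntegral.integral_congr
        intro t _
        dsimp only
        ring
      · apply ContinuousOn.intervalIntegrable
        rw [uIcc_of_le hab]
        exact (hgc.sub continuousOn_const).mul (Polynomial.continuous _).continuousOn
      · apply Continuous.intervalIntegrable
        exact (continuous_const.mul (Polynomial.continuous _))
    rw [hrw, hPhiInt, mul_zero, add_zero, abs_mul]
    have hmid : |∫ t in a..b, (g t - g a) * Polynomial.eval t (PhiP n r j)|
        ≤ (Lg * (1/n)) * (1/n)^(2*r+1) * (1/n) := by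
      have := intervalIntegral.norm_integral_le_of_norm_le_const
        (C := (Lg * (1/n)) * (1/n)^(2*r+1))
        (f := fun t => (g t - g a) * Polynomial.eval t (PhiP n r j)) (a := a) (b := b) ?_
      · rw [Real.norm_eq_abs] at this
        calc |∫ t in a..b, (g t - g a) * Polynomial.eval t (PhiP n r j)|
            ≤ (Lg * (1/n)) * (1/n)^(2*r+1) * |b - a| := this
          _ = (Lg * (1/n)) * (1/n)^(2*r+1) * (1/n) := by
              rw [hb, ha]; rw [abs_of_pos]; ring_nf; linarith
      · intro x hx
        rw [uIoc_of_le hab] at hx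
        have hxI : x ∈ Icc a b := ⟨le_of_lt hx.1, hx.2⟩
        rw [Real.norm_eq_abs, abs_mul]
        have h9 : |g x - g a| ≤ Lg * (1/n) := by
          calc |g x - g a| ≤ Lg * |x - a| := hLip x hxI
            _ ≤ Lg * (1/n) := by
                apply mul_le_mul_of_nonneg_left _ hLg
                rw [abs_of_nonneg (by linarith [hxI.1])]
                have := hxI.2; rw [hb] at this; linarith
        exact mul_le_mul h9 (PhiP_eval_abs_le hn hr hxI) (abs_nonneg _)
          (by positivity)
    calc |q.coeff (2*r+1)| * |∫ t in a..b, (g t - g a) * Polynomial.eval t (PhiP n r j)|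
        ≤ M * ((Lg * (1/n)) * (1/n)^(2*r+1) * (1/n)) := by
          apply mul_le_mul hcabs hmid (abs_nonneg _) hM0
      _ = M * (Lg * (1/n)^(2*r+3)) := by ring
  -- combine
  calc |∫ t in a..b, g t * (W 0 t - Polynomial.eval t (interpPoly n r j (W 0)))|
      ≤ |∫ t in a..b, g t * (R t - Polynomial.eval t PR)|
        + |∫ t in a..b, g t * (q.coeff (2*r+1) * Polynomial.eval t (PhiP n r j))| := by
        rw [hsplit]; exact abs_add_le _ _
    _ ≤ Cg * ((1 + Λ) * (M * (1/n)^(2*r+2))) * (1/n) + M * (Lg * (1/n)^(2*r+3)) :=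
        add_le_add hI1 hI2
    _ = ((Λ + 1) * Cg + Lg) * M * (1/n)^(2*r+3) := by ring
  done

end interval
section qn

lemma Qn_index {n j : ℕ} (hn : 1 ≤ n) (hj1 : 1 ≤ j) (hjn : j ≤ n) {t : ℝ}
    (ht : t ∈ Ico (((j:ℝ)-1)/n) (((j:ℝ)-1)/n + 1/n)) :
    min n (⌊t * (n:ℝ)⌋₊ + 1) = j := by
  have hn' : (0:ℝ) < n := by positivity
  have hj' : (1:ℝ) ≤ j := by exact_mod_cast hj1
  have ht0 : 0 ≤ t := le_trans (by apply div_nonneg <;> linarith) ht.1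
  have h1 : ((j:ℝ)-1) ≤ t * n := by
    have := ht.1
    rw [div_le_iff₀ hn'] at this
    linarith
  have h2 : t * n < j := by
    have := ht.2
    have h3 : t < ((j:ℝ)-1+1)/n := by
      rw [add_div]
      have : ((j:ℝ)-1)/n + 1/n = ((j:ℝ)-1)/n + 1/n := rfl
      linarith [ht.2]
    rw [lt_div_iff₀ hn'] at h3
    linarith
  have hfl : ⌊t * (n:ℝ)⌋₊ = j - 1 := by
    rw [Nat.floor_eq_iff (by positivity)]
    constructor
    · rw [Nat.cast_sub hj1]; exact_mod_cast h1
    · rw [Nat.cast_sub hj1]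
      push_cast
      linarith
  rw [hfl]
  have : j - 1 + 1 = j := by omega
  rw [this]
  exact min_eq_right hjn

lemma Qn_eq_on {n r j : ℕ} (hn : 1 ≤ n) (hj1 : 1 ≤ j) (hjn : j ≤ n) (w : ℝ → ℝ) {t : ℝ}
    (ht : t ∈ Ico (((j:ℝ)-1)/n) (((j:ℝ)-1)/n + 1/n)) :
    Qn n r w t = Polynomial.eval t (interpPoly n r j w) := by
  simp only [Qn]
  rw [Qn_index hn hj1 hjn ht]

lemma sub_Icc {n j : ℕ} (hn : 1 ≤ n) (hj1 : 1 ≤ j) (hjn : j ≤ n) :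
    Icc (((j:ℝ)-1)/n) (((j:ℝ)-1)/n + 1/n) ⊆ Icc (0:ℝ) 1 := by
  have hn' : (0:ℝ) < n := by positivity
  have hj' : (1:ℝ) ≤ j := by exact_mod_cast hj1
  have hjn' : (j:ℝ) ≤ n := by exact_mod_cast hjn
  intro t ht
  obtain ⟨h1, h2⟩ := ht
  constructor
  · refine le_trans ?_ h1
    apply div_nonneg <;> linarith
  · refine le_trans h2 ?_
    rw [← add_div, div_le_one hn']
    linarith

/-- For `t ∈ [0,1]`, the active subinterval contains `t`. -/
lemma Qn_active {n : ℕ} (hn : 1 ≤ n) {t : ℝ} (ht : t ∈ Icc (0:ℝ) 1) :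
    1 ≤ min n (⌊t * (n:ℝ)⌋₊ + 1) ∧ min n (⌊t * (n:ℝ)⌋₊ + 1) ≤ n ∧
      t ∈ Icc (((((min n (⌊t * (n:ℝ)⌋₊ + 1) : ℕ)):ℝ)-1)/(n:ℝ))
            (((((min n (⌊t * (n:ℝ)⌋₊ + 1) : ℕ)):ℝ)-1)/(n:ℝ) + 1/(n:ℝ)) := by
  have hn' : (0:ℝ) < n := by positivity
  have ht0 : 0 ≤ t * n := by
    apply mul_nonneg ht.1; linarith
  set k := ⌊t * (n:ℝ)⌋₊ with hk
  by_cases hcase : k + 1 ≤ n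
  · have hmin : min n (k+1) = k+1 := min_eq_right hcase
    refine ⟨by omega, by omega, ?_⟩
    rw [hmin]
    have hfl : (k:ℝ) ≤ t * n := Nat.floor_le ht0
    have hfu : t * n < (k:ℝ) + 1 := Nat.lt_floor_add_one _
    constructor
    · push_cast
      rw [div_le_iff₀ hn']
      push_cast
      linarith
    · rw [← add_div, le_div_iff₀ hn']
      push_cast
      linarith
  · have hmin : min n (k+1) = n := min_eq_left (by omega)
    refine ⟨by omega, by omega, ?_⟩
    rw [hmin]
    -- here t must be ≥ 1, hence = 1
    have hkn : (n:ℝ) ≤ k := by exact_mod_cast (by omega : n ≤ k)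
    have hfl : (k:ℝ) ≤ t * n := Nat.floor_le ht0
    have h1 : (1:ℝ) ≤ t := by
      nlinarith [ht.2]
    have ht1 : t = 1 := le_antisymm ht.2 h1
    rw [ht1]
    constructor
    · rw [div_le_one hn']
      have : (1:ℝ) ≤ n := by exact_mod_cast hn
      linarith
    · rw [← add_div, le_div_iff₀ hn']
      linarith

/-- Global bound for `Qn`. -/
lemma Qn_bound {n r : ℕ} (hn : 1 ≤ n) (hr : 1 ≤ r) {w : ℝ → ℝ} {B : ℝ}
    (hw : ∀ u ∈ Icc (0:ℝ) 1, |w u| ≤ B) {t : ℝ} (ht : t ∈ Icc (0:ℝ) 1) :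
    |Qn n r w t| ≤ ((2*r+1) * (2*r)^(2*r) : ℝ) * B := by
  obtain ⟨hj1, hjn, htj⟩ := Qn_active hn ht
  set j := min n (⌊t * (n:ℝ)⌋₊ + 1) with hj
  simp only [Qn]
  apply interp_stab hn hr htj
  intro i hi
  exact hw _ (sub_Icc hn hj1 hjn (tau_mem hn hr hi))

/-- On each subinterval, the integrand with `Qn` agrees a.e. with the polynomial version. -/
lemma Qn_ae_eq {n r j : ℕ} (hn : 1 ≤ n) (hj1 : 1 ≤ j) (hjn : j ≤ n) (f w : ℝ → ℝ) :
    ∀ᵐ t ∂(volume : Measure ℝ), t ∈ Set.uIoc (((j:ℝ)-1)/n) (((j:ℝ)-1)/n + 1/n) →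
      f t * (w t - Qn n r w t) = f t * (w t - Polynomial.eval t (interpPoly n r j w)) := by
  have hn' : (0:ℝ) < n := by positivity
  have hab : (((j:ℝ)-1)/n) ≤ (((j:ℝ)-1)/n + 1/n) := by
    have : (0:ℝ) < 1/n := by positivity
    linarith
  have h1 : ∀ᵐ (t:ℝ) ∂volume, t ≠ (((j:ℝ)-1)/n + 1/n) := by
    rw [ae_iff]
    have : {t : ℝ | ¬ t ≠ (((j:ℝ)-1)/n + 1/n)} = {(((j:ℝ)-1)/n + 1/n)} := by
      ext u; simp
    rw [this]
    exact measure_singleton _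
  filter_upwards [h1] with t hne hmem
  rw [uIoc_of_le hab] at hmem
  have htIco : t ∈ Ico (((j:ℝ)-1)/n) (((j:ℝ)-1)/n + 1/n) :=
    ⟨le_of_lt hmem.1, lt_of_le_of_ne hmem.2 hne⟩
  rw [Qn_eq_on hn hj1 hjn w htIco]

lemma piece_integrable {n r j : ℕ} (hn : 1 ≤ n) (hr : 1 ≤ r) (hj1 : 1 ≤ j) (hjn : j ≤ n)
    {g w : ℝ → ℝ} (hg : ContinuousOn g (Icc 0 1)) (hw : ContinuousOn w (Icc 0 1)) :
    IntervalIntegrable (fun t => g t * (w t - Qn n r w t)) volume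
      (((j:ℝ)-1)/n) (((j:ℝ)-1)/n + 1/n) := by
  have hn' : (0:ℝ) < n := by positivity
  have hab : (((j:ℝ)-1)/n) ≤ (((j:ℝ)-1)/n + 1/n) := by
    have : (0:ℝ) < 1/n := by positivity
    linarith
  have hcont : IntervalIntegrable
      (fun t => g t * (w t - Polynomial.eval t (interpPoly n r j w))) volume
      (((j:ℝ)-1)/n) (((j:ℝ)-1)/n + 1/n) := by
    apply ContinuousOn.intervalIntegrable
    rw [uIcc_of_le hab]
    exact ((hg.mono (sub_Icc hn hj1 hjn)).mul
      (((hw.mono (sub_Icc hn hj1 hjn))).sub (Polynomial.continuous _).continuousOn))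
  rw [intervalIntegrable_iff_integrableOn_Ioc_of_le hab] at hcont ⊢
  apply hcont.congr
  have h2 := ae_restrict_of_ae (μ := volume)
    (Qn_ae_eq (r := r) hn hj1 hjn g w) (s := Ioc (((j:ℝ)-1)/n) (((j:ℝ)-1)/n + 1/n))
  have h3 := ae_restrict_mem (μ := volume)
    (measurableSet_Ioc (a := (((j:ℝ)-1)/n)) (b := (((j:ℝ)-1)/n + 1/n)))
  filter_upwards [h2, h3] with t h2t h3t
  rw [uIoc_of_le hab] at h2t
  exact (h2t h3t).symm

/-- Global superconvergence estimate for `K`-type integrals against interpolation error. -/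
lemma global_est {n r : ℕ} (hn : 1 ≤ n) (hr : 1 ≤ r)
    (g : ℝ → ℝ) (Cg Lg : ℝ) (hLg : 0 ≤ Lg)
    (hgc : ContinuousOn g (Icc 0 1))
    (hg : ∀ t ∈ Icc (0:ℝ) 1, |g t| ≤ Cg)
    (hLip : ∀ t ∈ Icc (0:ℝ) 1, ∀ t' ∈ Icc (0:ℝ) 1, |g t - g t'| ≤ Lg * |t - t'|)
    (W : ℕ → ℝ → ℝ) (M : ℝ)
    (hWder : ∀ k < 2*r+2, ∀ t ∈ Icc (0:ℝ) 1, HasDerivWithinAt (W k) (W (k+1) t) (Icc 0 1) t)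
    (hWbd : ∀ k ≤ 2*r+2, ∀ t ∈ Icc (0:ℝ) 1, |W k t| ≤ M) :
    |∫ t in (0:ℝ)..1, g t * (W 0 t - Qn n r (W 0) t)|
      ≤ ((((2*r+1) * (2*r)^(2*r) : ℝ) + 1) * Cg + Lg) * M * (1/n)^(2*r+2) := by
  have hn' : (0:ℝ) < n := by positivity
  have hW0c : ContinuousOn (W 0) (Icc 0 1) :=
    fun t ht => ((hWder 0 (by omega) t ht).differentiableWithinAt).continuousWithinAt
  set f := fun t => g t * (W 0 t - Qn n r (W 0) t) with hf
  set pt := fun k : ℕ => (k:ℝ)/n with hpt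
  have hpteq : ∀ k : ℕ, pt (k+1) = (((k+1:ℕ):ℝ)-1)/n + 1/n := by
    intro k
    rw [hpt]
    push_cast
    ring
  have hpteq0 : ∀ k : ℕ, pt k = (((k+1:ℕ):ℝ)-1)/n := by
    intro k; rw [hpt]; push_cast; ring
  have hint : ∀ k < n, IntervalIntegrable f volume (pt k) (pt (k+1)) := by
    intro k hk
    rw [hpteq, hpteq0]
    exact piece_integrable hn hr (by omega) (by omega) hgc hW0c
  have hsum := intervalIntegral.sum_integral_adjacent_intervals hint
  have hpt0 : pt 0 = 0 := by rw [hpt]; simp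
  have hptn : pt n = 1 := by rw [hpt]; field_simp
  rw [hpt0, hptn] at hsum
  rw [← hsum]
  -- bound each term
  have hterm : ∀ k ∈ Finset.range n, |∫ t in (pt k)..(pt (k+1)), f t|
      ≤ ((((2*r+1) * (2*r)^(2*r) : ℝ) + 1) * Cg + Lg) * M * (1/n)^(2*r+3) := by
    intro k hk
    have hkn : k < n := Finset.mem_range.mp hk
    set j := k + 1 with hjdef
    have hj1 : 1 ≤ j := by omega
    have hjn : j ≤ n := by omega
    have hsub := sub_Icc (j := j) hn hj1 hjn
    have hcongr : (∫ t in (pt k)..(pt (k+1)), f t)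
        = ∫ t in (((j:ℝ)-1)/n)..(((j:ℝ)-1)/n + 1/n),
            g t * (W 0 t - Polynomial.eval t (interpPoly n r j (W 0))) := by
      rw [hpteq, hpteq0]
      exact intervalIntegral.integral_congr_ae (Qn_ae_eq hn hj1 hjn g (W 0))
    rw [hcongr]
    apply interval_est hn hr hj1 hjn g Cg Lg hLg
      (hgc.mono hsub) (fun t ht => hg t (hsub ht))
      (fun t ht => hLip t (hsub ht) _ (hsub ⟨le_refl _, by
        have : (0:ℝ) < 1/n := by positivity
        linarith⟩))
      W M
      (fun k hk t ht => (hWder k hk t (hsub ht)).mono hsub)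
      (fun k hk t ht => hWbd k hk t (hsub ht))
  calc |∑ k ∈ Finset.range n, ∫ t in (pt k)..(pt (k+1)), f t|
      ≤ ∑ k ∈ Finset.range n, |∫ t in (pt k)..(pt (k+1)), f t| :=
        Finset.abs_sum_le_sum_abs _ _
    _ ≤ ∑ _k ∈ Finset.range n,
          ((((2*r+1) * (2*r)^(2*r) : ℝ) + 1) * Cg + Lg) * M * (1/n)^(2*r+3) :=
        Finset.sum_le_sum hterm
    _ = n * (((((2*r+1) * (2*r)^(2*r) : ℝ) + 1) * Cg + Lg) * M * (1/n)^(2*r+3)) := by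
        rw [Finset.sum_const, Finset.card_range]; ring
    _ = ((((2*r+1) * (2*r)^(2*r) : ℝ) + 1) * Cg + Lg) * M * (1/n)^(2*r+2) := by
        have h9 : ((1:ℝ)/n)^(2*r+3) = (1/n)^(2*r+2) * (1/n) := by rw [pow_succ]
        rw [h9]
        field_simp
  done

end qn
section param

variable {r : ℕ} {κd : ℕ → ℕ → ℝ → ℝ → ℝ} {C₂ : ℝ}

lemma slice_cont {α β : ℕ}
    (hcont : ∀ α β : ℕ, α + β ≤ 2 * r + 3 →
      ContinuousOn (fun q : ℝ × ℝ => κd α β q.1 q.2) (Set.Icc 0 1 ×ˢ Set.Icc 0 1))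
    (hαβ : α + β ≤ 2*r+3) {s : ℝ} (hs : s ∈ Icc (0:ℝ) 1) :
    ContinuousOn (fun t => κd α β s t) (Icc 0 1) := by
  have h1 := (hcont α β hαβ).comp
    ((continuous_const.prodMk continuous_id).continuousOn (s := Icc (0:ℝ) 1))
    (fun t ht => Set.mk_mem_prod hs ht)
  exact h1

lemma param_bound {α β : ℕ}
    (hbd : ∀ α β : ℕ, α + β ≤ 2 * r + 3 →
      ∀ s ∈ Set.Icc (0:ℝ) 1, ∀ t ∈ Set.Icc (0:ℝ) 1, |κd α β s t| ≤ C₂)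
    (hαβ : α + β ≤ 2*r+3) {w : ℝ → ℝ} {B : ℝ} (hB0 : 0 ≤ B)
    (hwB : ∀ t ∈ Icc (0:ℝ) 1, |w t| ≤ B) {s : ℝ} (hs : s ∈ Icc (0:ℝ) 1) :
    |∫ t in (0:ℝ)..1, κd α β s t * w t| ≤ C₂ * B := by
  have h1 := intervalIntegral.norm_integral_le_of_norm_le_const (C := C₂ * B)
    (f := fun t => κd α β s t * w t) (a := (0:ℝ)) (b := 1) ?_
  · rw [Real.norm_eq_abs] at h1
    simpa using h1
  · intro x hx
    rw [uIoc_of_le zero_le_one] at hx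
    have hxI : x ∈ Icc (0:ℝ) 1 := ⟨le_of_lt hx.1, hx.2⟩
    rw [Real.norm_eq_abs, abs_mul]
    exact mul_le_mul (hbd α β hαβ s hs x hxI) (hwB x hxI) (abs_nonneg _)
      (le_trans (abs_nonneg _) (hbd α β hαβ s hs x hxI))

/-- Differentiation under the integral sign, within `[0,1]`. -/
lemma param_hasDeriv (hr : 1 ≤ r)
    (hds : ∀ α β : ℕ, α + β + 1 ≤ 2 * r + 3 → ∀ t ∈ Set.Icc (0:ℝ) 1, ∀ s ∈ Set.Icc (0:ℝ) 1,
      HasDerivWithinAt (fun u => κd α β u t) (κd (α + 1) β s t) (Set.Icc 0 1) s)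
    (hcont : ∀ α β : ℕ, α + β ≤ 2 * r + 3 →
      ContinuousOn (fun q : ℝ × ℝ => κd α β q.1 q.2) (Set.Icc 0 1 ×ˢ Set.Icc 0 1))
    {α : ℕ} (hα : α + 1 ≤ 2*r+3)
    {w : ℝ → ℝ} {B : ℝ} (hB0 : 0 ≤ B)
    (hwB : ∀ t ∈ Icc (0:ℝ) 1, |w t| ≤ B)
    (hwint : ∀ g : ℝ → ℝ, ContinuousOn g (Icc 0 1) →
      IntervalIntegrable (fun t => g t * w t) volume 0 1)
    {s : ℝ} (hs : s ∈ Icc (0:ℝ) 1) :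
    HasDerivWithinAt (fun u => ∫ t in (0:ℝ)..1, κd α 0 u t * w t)
      (∫ t in (0:ℝ)..1, κd (α+1) 0 s t * w t) (Icc 0 1) s := by
  rw [hasDerivWithinAt_iff_isLittleO, Asymptotics.isLittleO_iff]
  intro c hc
  have hK1 := hcont (α+1) 0 (by omega)
  have hucomp := (isCompact_Icc.prod isCompact_Icc).uniformContinuousOn_of_continuous hK1
  rw [Metric.uniformContinuousOn_iff] at hucomp
  have hε0 : (0:ℝ) < c / (B+1) := by positivity
  obtain ⟨δ, hδ0, hδ⟩ := hucomp (c/(B+1)) hε0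
  have h1 : Metric.ball s δ ∈ nhdsWithin s (Icc (0:ℝ) 1) :=
    nhdsWithin_le_nhds (Metric.ball_mem_nhds s hδ0)
  filter_upwards [h1, self_mem_nhdsWithin] with s' hball hmem
  have hball' : dist s' s < δ := Metric.mem_ball.mp hball
  -- integrability of the three parts
  have hint1 := hwint _ (slice_cont hcont (show α + 0 ≤ 2*r+3 by omega) hmem)
  have hint2 := hwint _ (slice_cont hcont (show α + 0 ≤ 2*r+3 by omega) hs)
  have hint3 := hwint _ (slice_cont hcont (show (α+1) + 0 ≤ 2*r+3 by omega) hs)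
  have key : (∫ t in (0:ℝ)..1, κd α 0 s' t * w t) - (∫ t in (0:ℝ)..1, κd α 0 s t * w t)
      - (s' - s) • (∫ t in (0:ℝ)..1, κd (α+1) 0 s t * w t)
      = ∫ t in (0:ℝ)..1,
          (κd α 0 s' t - κd α 0 s t - (s'-s) * κd (α+1) 0 s t) * w t := by
    have hrw : (fun t => (κd α 0 s' t - κd α 0 s t - (s'-s) * κd (α+1) 0 s t) * w t)
        = fun t => κd α 0 s' t * w t - κd α 0 s t * w t
            - (s'-s) * (κd (α+1) 0 s t * w t) := by
      funext t; ring
    rw [hrw, intervalIntegral.integral_sub (hint1.sub hint2) (hint3.const_mul _),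
      intervalIntegral.integral_sub hint1 hint2, intervalIntegral.integral_const_mul,
      smul_eq_mul]
  rw [key]
  -- pointwise bound via MVT
  set S := Icc (0:ℝ) 1 ∩ Metric.ball s δ with hS
  have hsS : s ∈ S := ⟨hs, Metric.mem_ball_self hδ0⟩
  have hs'S : s' ∈ S := ⟨hmem, hball⟩
  have hconvex : Convex ℝ S := (convex_Icc 0 1).inter (convex_ball s δ)
  have hptwise : ∀ x ∈ Set.Ioc (0:ℝ) 1,
      ‖(κd α 0 s' x - κd α 0 s x - (s'-s) * κd (α+1) 0 s x) * w x‖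
        ≤ (c/(B+1)) * ‖s' - s‖ * B := by
    intro x hx
    have hxI : x ∈ Icc (0:ℝ) 1 := ⟨le_of_lt hx.1, hx.2⟩
    set φ := fun u => κd α 0 u x - u * κd (α+1) 0 s x with hφ
    have hφder : ∀ u ∈ S, HasDerivWithinAt φ
        (κd (α+1) 0 u x - κd (α+1) 0 s x) S u := by
      intro u hu
      exact ((hds α 0 (by omega) x hxI u hu.1).mono inter_subset_left).sub
        ((hasDerivAt_mul_const _).hasDerivWithinAt)
    have hφbd : ∀ u ∈ S, ‖κd (α+1) 0 u x - κd (α+1) 0 s x‖ ≤ c/(B+1) := by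
      intro u hu
      have hd := hδ (u, x) (Set.mk_mem_prod hu.1 hxI) (s, x) (Set.mk_mem_prod hs hxI) ?_
      · rw [Real.dist_eq] at hd
        exact le_of_lt hd
      · rw [Prod.dist_eq]
        simp only [dist_self]
        rw [max_eq_left dist_nonneg]
        exact Metric.mem_ball.mp hu.2
    have hmvt := hconvex.norm_image_sub_le_of_norm_hasDerivWithin_le hφder hφbd hsS hs'S
    have hφdiff : φ s' - φ s = κd α 0 s' x - κd α 0 s x - (s'-s) * κd (α+1) 0 s x := by
      rw [hφ]; ring
    rw [hφdiff] at hmvt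
    rw [norm_mul]
    calc ‖κd α 0 s' x - κd α 0 s x - (s'-s) * κd (α+1) 0 s x‖ * ‖w x‖
        ≤ ((c/(B+1)) * ‖s' - s‖) * B := by
          apply mul_le_mul hmvt _ (norm_nonneg _) (by positivity)
          rw [Real.norm_eq_abs]
          exact hwB x hxI
      _ = (c/(B+1)) * ‖s' - s‖ * B := by ring
  have hnorm := intervalIntegral.norm_integral_le_of_norm_le_const
    (C := (c/(B+1)) * ‖s' - s‖ * B)
    (f := fun t => (κd α 0 s' t - κd α 0 s t - (s'-s) * κd (α+1) 0 s t) * w t)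
    (a := (0:ℝ)) (b := 1) (by
      intro x hx
      rw [uIoc_of_le zero_le_one] at hx
      exact hptwise x hx)
  calc ‖∫ t in (0:ℝ)..1, (κd α 0 s' t - κd α 0 s t - (s'-s) * κd (α+1) 0 s t) * w t‖
      ≤ (c/(B+1)) * ‖s' - s‖ * B * |1 - 0| := hnorm
    _ = (c/(B+1)) * B * ‖s' - s‖ := by norm_num [Real.norm_eq_abs]; ring
    _ ≤ c * ‖s' - s‖ := by
        apply mul_le_mul_of_nonneg_right _ (norm_nonneg _)
        rw [div_mul_eq_mul_div, div_le_iff₀ (by positivity)]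
        nlinarith
  done

end param
section final

lemma supNorm_le {f : ℝ → ℝ} {B : ℝ} (hB : ∀ t ∈ Icc (0:ℝ) 1, |f t| ≤ B) :
    supNorm f ≤ B := by
  have hne : Nonempty (Set.Icc (0:ℝ) 1) := ⟨⟨0, ⟨le_refl 0, zero_le_one⟩⟩⟩
  exact ciSup_le (fun t => hB t.1 t.2)

lemma le_supNorm {f : ℝ → ℝ} (hf : ContinuousOn f (Icc 0 1)) {t : ℝ}
    (ht : t ∈ Icc (0:ℝ) 1) : |f t| ≤ supNorm f := by
  have hbdd : BddAbove (Set.range (fun u : Set.Icc (0:ℝ) 1 => |f u.1|)) := by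
    have hcomp : IsCompact ((fun u => |f u|) '' Icc (0:ℝ) 1) :=
      isCompact_Icc.image_of_continuousOn hf.abs
    have him : Set.range (fun u : Set.Icc (0:ℝ) 1 => |f u.1|)
        = (fun u => |f u|) '' Icc 0 1 := by
      ext y
      constructor
      · rintro ⟨⟨u, hu⟩, rfl⟩; exact ⟨u, hu, rfl⟩
      · rintro ⟨u, hu, rfl⟩; exact ⟨⟨u, hu⟩, rfl⟩
    rw [him]
    exact hcomp.bddAbove
  exact le_ciSup hbdd ⟨t, ht⟩

lemma Qn_whole_integrable {n r : ℕ} (hn : 1 ≤ n) (hr : 1 ≤ r) {g w : ℝ → ℝ}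
    (hg : ContinuousOn g (Icc 0 1)) (hw : ContinuousOn w (Icc 0 1)) :
    IntervalIntegrable (fun t => g t * (w t - Qn n r w t)) volume 0 1 := by
  have hn' : (0:ℝ) < n := by positivity
  have key : ∀ m : ℕ, m ≤ n →
      IntervalIntegrable (fun t => g t * (w t - Qn n r w t)) volume 0 ((m:ℝ)/n) := by
    intro m
    induction m with
    | zero =>
      intro _
      simp only [Nat.cast_zero, zero_div]
      exact IntervalIntegrable.refl
    | succ m ih =>
      intro hm
      have h1 := ih (by omega)
      have h2 : IntervalIntegrable (fun t => g t * (w t - Qn n r w t)) volume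
          ((m:ℝ)/n) (((m+1:ℕ):ℝ)/n) := by
        have e1 : ((m:ℝ))/n = (((m+1:ℕ):ℝ)-1)/n := by push_cast; ring
        have e2 : (((m+1:ℕ):ℝ))/n = (((m+1:ℕ):ℝ)-1)/n + 1/n := by push_cast; ring
        rw [e1, e2]
        exact piece_integrable hn hr (by omega) (by exact_mod_cast hm) hg hw
      exact h1.trans h2
  have := key n le_rfl
  rw [div_self (ne_of_gt hn')] at this
  exact this

/-- Lemma 5, second estimate: with `x := Kψ` and `z := K(x − Q_n x)`, `‖K(z − Q_n z)‖_∞ ≤ C ‖ψ‖_∞ h^{4r+4}` with `C` independent of `n`. -/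
theorem stmt_17 (r : ℕ) (hr : 1 ≤ r)
    (κ : ℝ → ℝ → ℝ) (κd : ℕ → ℕ → ℝ → ℝ → ℝ) (C₂ : ℝ) (hC₂ : 0 < C₂)
    (hκ0 : κd 0 0 = κ)
    (hds : ∀ α β : ℕ, α + β + 1 ≤ 2 * r + 3 → ∀ t ∈ Set.Icc (0:ℝ) 1, ∀ s ∈ Set.Icc (0:ℝ) 1,
      HasDerivWithinAt (fun u => κd α β u t) (κd (α + 1) β s t) (Set.Icc 0 1) s)
    (hdt : ∀ α β : ℕ, α + β + 1 ≤ 2 * r + 3 → ∀ s ∈ Set.Icc (0:ℝ) 1, ∀ t ∈ Set.Icc (0:ℝ) 1,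
      HasDerivWithinAt (fun u => κd α β s u) (κd α (β + 1) s t) (Set.Icc 0 1) t)
    (hcont : ∀ α β : ℕ, α + β ≤ 2 * r + 3 →
      ContinuousOn (fun q : ℝ × ℝ => κd α β q.1 q.2) (Set.Icc 0 1 ×ˢ Set.Icc 0 1))
    (hbd : ∀ α β : ℕ, α + β ≤ 2 * r + 3 →
      ∀ s ∈ Set.Icc (0:ℝ) 1, ∀ t ∈ Set.Icc (0:ℝ) 1, |κd α β s t| ≤ C₂)
    :
    ∃ C : ℝ, 0 < C ∧
      ∀ n : ℕ, 1 ≤ n → ∀ ψ : ℝ → ℝ, ContinuousOn ψ (Set.Icc 0 1) →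
        supNorm (Kop κ (fun t =>
            Kop κ (fun u => Kop κ ψ u - Qn n r (Kop κ ψ) u) t -
              Qn n r (Kop κ (fun u => Kop κ ψ u - Qn n r (Kop κ ψ) u)) t)) ≤
          C * supNorm ψ * ((1 : ℝ) / n) ^ (4 * r + 4) := by
  classical
  refine ⟨((((2*r+1) * (2*r)^(2*r) : ℝ) + 2) * C₂)^2 * C₂, by positivity, ?_⟩
  intro n hn ψ hψ
  have hn' : (0:ℝ) < n := by positivity
  have h0mem : (0:ℝ) ∈ Icc (0:ℝ) 1 := ⟨le_refl 0, zero_le_one⟩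
  have hψb : ∀ t ∈ Icc (0:ℝ) 1, |ψ t| ≤ supNorm ψ := fun t ht => le_supNorm hψ ht
  have hB0 : 0 ≤ supNorm ψ := le_trans (abs_nonneg _) (hψb 0 h0mem)
  have hψint : ∀ g : ℝ → ℝ, ContinuousOn g (Icc 0 1) →
      IntervalIntegrable (fun t => g t * ψ t) volume 0 1 := by
    intro g hg
    apply ContinuousOn.intervalIntegrable
    rw [uIcc_of_le zero_le_one]
    exact hg.mul hψ
  -- the chain for x = Kψ
  set X := fun (k : ℕ) (s : ℝ) => ∫ t in (0:ℝ)..1, κd k 0 s t * ψ t with hX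
  have hXder : ∀ k < 2*r+2, ∀ s ∈ Icc (0:ℝ) 1,
      HasDerivWithinAt (X k) (X (k+1) s) (Icc 0 1) s :=
    fun k hk s hs => param_hasDeriv hr hds hcont (by omega) hB0 hψb hψint hs
  have hXbd : ∀ k ≤ 2*r+2, ∀ s ∈ Icc (0:ℝ) 1, |X k s| ≤ C₂ * supNorm ψ :=
    fun k hk s hs => param_bound hbd (by omega) hB0 hψb hs
  have hX0 : X 0 = Kop κ ψ := by
    funext u
    show (∫ t in (0:ℝ)..1, κd 0 0 u t * ψ t) = ∫ t in (0:ℝ)..1, κ u t * ψ t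
    rw [hκ0]
  have hxcont : ContinuousOn (Kop κ ψ) (Icc 0 1) := by
    rw [← hX0]
    exact fun s hs => ((hXder 0 (by omega) s hs).differentiableWithinAt).continuousWithinAt
  set w1 := fun u => Kop κ ψ u - Qn n r (Kop κ ψ) u with hw1
  have hw1b : ∀ t ∈ Icc (0:ℝ) 1,
      |w1 t| ≤ (1 + ((2*r+1) * (2*r)^(2*r) : ℝ)) * (C₂ * supNorm ψ) := by
    intro t ht
    have h1 : |Kop κ ψ t| ≤ C₂ * supNorm ψ := by
      rw [← hX0]; exact hXbd 0 (by omega) t ht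
    have h2 : |Qn n r (Kop κ ψ) t| ≤ ((2*r+1) * (2*r)^(2*r) : ℝ) * (C₂ * supNorm ψ) := by
      apply Qn_bound hn hr _ ht
      intro u hu
      rw [← hX0]; exact hXbd 0 (by omega) u hu
    calc |w1 t| ≤ |Kop κ ψ t| + |Qn n r (Kop κ ψ) t| := abs_sub _ _
      _ ≤ C₂ * supNorm ψ + ((2*r+1) * (2*r)^(2*r) : ℝ) * (C₂ * supNorm ψ) :=
          add_le_add h1 h2
      _ = (1 + ((2*r+1) * (2*r)^(2*r) : ℝ)) * (C₂ * supNorm ψ) := by ring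
  have hw1B0 : (0:ℝ) ≤ (1 + ((2*r+1) * (2*r)^(2*r) : ℝ)) * (C₂ * supNorm ψ) := by positivity
  have hw1int : ∀ g : ℝ → ℝ, ContinuousOn g (Icc 0 1) →
      IntervalIntegrable (fun t => g t * w1 t) volume 0 1 :=
    fun g hg => Qn_whole_integrable hn hr hg hxcont
  -- the chain for z = K w1
  set Z := fun (k : ℕ) (s : ℝ) => ∫ t in (0:ℝ)..1, κd k 0 s t * w1 t with hZ
  have hZder : ∀ k < 2*r+2, ∀ s ∈ Icc (0:ℝ) 1,
      HasDerivWithinAt (Z k) (Z (k+1) s) (Icc 0 1) s :=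
    fun k hk s hs => param_hasDeriv hr hds hcont (by omega) hw1B0 hw1b hw1int hs
  have hZ0 : Z 0 = Kop κ w1 := by
    funext u
    show (∫ t in (0:ℝ)..1, κd 0 0 u t * w1 t) = ∫ t in (0:ℝ)..1, κ u t * w1 t
    rw [hκ0]
  -- Lipschitz property of the kernel slices in t
  have hgLip : ∀ k ≤ 2*r+2, ∀ s ∈ Icc (0:ℝ) 1, ∀ t ∈ Icc (0:ℝ) 1, ∀ t' ∈ Icc (0:ℝ) 1,
      |κd k 0 s t - κd k 0 s t'| ≤ C₂ * |t - t'| := by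
    intro k hk s hs t ht t' ht'
    have hmvt := (convex_Icc (0:ℝ) 1).norm_image_sub_le_of_norm_hasDerivWithin_le
      (f := fun u => κd k 0 s u) (f' := fun u => κd k 1 s u) (C := C₂)
      (fun u hu => hdt k 0 (by omega) s hs u hu)
      (fun u hu => by rw [Real.norm_eq_abs]; exact hbd k 1 (by omega) s hs u hu)
      ht' ht
    rw [Real.norm_eq_abs, Real.norm_eq_abs] at hmvt
    exact hmvt
  -- superconvergent bound on the Z chain
  have hZbd : ∀ k ≤ 2*r+2, ∀ s ∈ Icc (0:ℝ) 1,
      |Z k s| ≤ ((((2*r+1) * (2*r)^(2*r) : ℝ) + 1) * C₂ + C₂)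
        * (C₂ * supNorm ψ) * (1/n)^(2*r+2) := by
    intro k hk s hs
    have hglobal := global_est hn hr (fun t => κd k 0 s t) C₂ C₂ (le_of_lt hC₂)
      (slice_cont hcont (by omega) hs)
      (fun t ht => hbd k 0 (by omega) s hs t ht)
      (fun t ht t' ht' => hgLip k hk s hs t ht t' ht')
      X (C₂ * supNorm ψ) hXder hXbd
    have hzeq : Z k s = ∫ t in (0:ℝ)..1, κd k 0 s t * (X 0 t - Qn n r (X 0) t) := by
      rw [hZ, hX0]
    rw [hzeq]
    exact hglobal
  -- final bound
  rw [← hZ0]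
  have hfinal : ∀ s ∈ Icc (0:ℝ) 1,
      |Kop κ (fun t => Z 0 t - Qn n r (Z 0) t) s|
        ≤ ((((2*r+1) * (2*r)^(2*r) : ℝ) + 1) * C₂ + C₂)
          * (((((2*r+1) * (2*r)^(2*r) : ℝ) + 1) * C₂ + C₂)
            * (C₂ * supNorm ψ) * (1/n)^(2*r+2)) * (1/n)^(2*r+2) := by
    intro s hs
    have heq : Kop κ (fun t => Z 0 t - Qn n r (Z 0) t) s
        = ∫ t in (0:ℝ)..1, κd 0 0 s t * (Z 0 t - Qn n r (Z 0) t) := by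
      show (∫ t in (0:ℝ)..1, κ s t * (Z 0 t - Qn n r (Z 0) t)) = _
      rw [hκ0]
    rw [heq]
    exact global_est hn hr (fun t => κd 0 0 s t) C₂ C₂ (le_of_lt hC₂)
      (slice_cont hcont (by omega) hs)
      (fun t ht => hbd 0 0 (by omega) s hs t ht)
      (fun t ht t' ht' => hgLip 0 (by omega) s hs t ht t' ht')
      Z _ hZder hZbd
  apply le_trans (supNorm_le hfinal)
  have hpow : ((1:ℝ)/n)^(2*r+2) * (1/n)^(2*r+2) = (1/n)^(4*r+4) := by
    rw [← pow_add]
    congr 1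
    omega
  calc ((((2*r+1) * (2*r)^(2*r) : ℝ) + 1) * C₂ + C₂)
        * (((((2*r+1) * (2*r)^(2*r) : ℝ) + 1) * C₂ + C₂)
          * (C₂ * supNorm ψ) * (1/n)^(2*r+2)) * (1/n)^(2*r+2)
      = ((((2*r+1) * (2*r)^(2*r) : ℝ) + 2) * C₂)^2 * C₂ * supNorm ψ
        * ((1/n)^(2*r+2) * (1/n)^(2*r+2)) := by ring
    _ = ((((2*r+1) * (2*r)^(2*r) : ℝ) + 2) * C₂)^2 * C₂ * supNorm ψ
        * ((1:ℝ)/n)^(4*r+4) := by rw [hpow]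
    _ ≤ ((((2*r+1) * (2*r)^(2*r) : ℝ) + 2) * C₂)^2 * C₂ * supNorm ψ
        * ((1:ℝ)/n)^(4*r+4) := le_refl _
  done

end final
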